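/- Let G = K_{1,n} be a star with center u and leaves A, let r < 4, and let c be a circular r-coloring of (G, −) (all edges negative). Then for any cyclic arrangement C of the vertices of A, the winding number of the shortest-arc extension of c restricted to C is 0. -/

import Mathlib

open scoped Classical

/-- The representative in `[0, r)` of a point of the circle `O_r` (of circumference `r`),
i.e. the clockwise arc length from the base point `0`. -/
noncomputable def dlift (r : ℝ) (hr : 0 < r) (x : AddCircle r) : ℝ :=
  haveI : Fact (0 < r) := ⟨hr⟩
  ((AddCircle.equivIco r 0 x : Set.Ico (0 : ℝ) (0 + r)) : ℝ)

/-- The representative in `(-r/2, r/2]` of a point of the circle `O_r`: the signed length of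
the shortest arc from the base point (positive = clockwise). -/
noncomputable def slift (r : ℝ) (hr : 0 < r) (x : AddCircle r) : ℝ :=
  haveI : Fact (0 < r) := ⟨hr⟩
  ((AddCircle.equivIoc r (-(r / 2)) x : Set.Ioc (-(r / 2)) (-(r / 2) + r)) : ℝ)

/-- A mapping `c` of the vertices of the cycle `C_n` to the circle `O_r` is far-polar if for
each `i` the points `c (i-1)` and `c (i+1)` partition `O_r` into two arcs of unequal lengths
and `c i` lies strictly inside the larger arc.  Here `dlift r hr (c (i+1) - c (i-1))` is the
length of the clockwise arc from `c (i-1)` to `c (i+1)`. -/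
def FarPolarCycle (n : ℕ) (r : ℝ) (hr : 0 < r) (c : ZMod n → AddCircle r) : Prop :=
  ∀ i : ZMod n,
    dlift r hr (c (i + 1) - c (i - 1)) ≠ r / 2 ∧
    (if r / 2 < dlift r hr (c (i + 1) - c (i - 1)) then
      0 < dlift r hr (c i - c (i - 1)) ∧
        dlift r hr (c i - c (i - 1)) < dlift r hr (c (i + 1) - c (i - 1))
    else
      dlift r hr (c (i + 1) - c (i - 1)) < dlift r hr (c i - c (i - 1)))

lemma slift_mem (r : ℝ) (hr : 0 < r) (x : AddCircle r) :
    slift r hr x ∈ Set.Ioc (-(r / 2)) (r / 2) := by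
  haveI : Fact (0 < r) := ⟨hr⟩
  have h := (AddCircle.equivIoc r (-(r / 2)) x).2
  have h2 : slift r hr x ≤ -(r / 2) + r := h.2
  exact ⟨h.1, by linarith⟩

lemma slift_coe (r : ℝ) (hr : 0 < r) (x : ℝ) (hx : x ∈ Set.Ioc (-(r / 2)) (r / 2)) :
    slift r hr (x : AddCircle r) = x := by
  haveI : Fact (0 < r) := ⟨hr⟩
  show ((AddCircle.equivIoc r (-(r / 2)) (x : AddCircle r) : _) : ℝ) = x
  rw [show (AddCircle.equivIoc r (-(r / 2)) (x : AddCircle r)) =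
      QuotientAddGroup.equivIocMod hr (-(r / 2)) (x : AddCircle r) from rfl,
    QuotientAddGroup.equivIocMod_coe]
  exact (toIocMod_eq_self hr).mpr (by rwa [show -(r / 2) + r = r / 2 by ring])

lemma coe_slift (r : ℝ) (hr : 0 < r) (x : AddCircle r) :
    ((slift r hr x : ℝ) : AddCircle r) = x := by
  haveI : Fact (0 < r) := ⟨hr⟩
  exact (AddCircle.equivIoc r (-(r / 2))).symm_apply_apply x

/-- Let `G = K_{1,n}` be the star with center mapped to `cu` and leaves `c 0, …, c (n-1)`, let
`r < 4`, and let the map be a circular `r`-coloring of `(G, -)` (all edges negative, i.e. the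
center is at distance at least 1 from every leaf).  Then for any cyclic arrangement of the
leaves (given by a bijection `e : ZMod n → Fin n`), the winding number of the shortest-arc
extension of the resulting cycle is `0`:  the sum of the signed shortest displacements along
the cycle vanishes. -/
theorem winding_star_zero (n : ℕ) (hn : 1 ≤ n) (r : ℝ) (hr : 0 < r) (hr4 : r < 4)
    (cu : AddCircle r) (c : Fin n → AddCircle r)
    (hc : ∀ i : Fin n, 1 ≤ dist cu (c i))
    (e : ZMod n → Fin n) (he : Function.Bijective e) :
    (∑ j ∈ Finset.range n,
        slift r hr (c (e ((j + 1 : ℕ) : ZMod n)) - c (e ((j : ℕ) : ZMod n)))) = 0 := by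
  haveI : Fact (0 < r) := ⟨hr⟩
  set s : Fin n → ℝ := fun i => slift r hr (c i - cu) with hs
  have hsmem : ∀ i, s i ∈ Set.Ioc (-(r / 2)) (r / 2) := fun i => slift_mem r hr _
  have hs1 : ∀ i, 1 ≤ |s i| := by
    intro i
    have h1 := hc i
    rw [dist_eq_norm] at h1
    have h2 : ((s i : ℝ) : AddCircle r) = c i - cu := coe_slift r hr _
    have h3 : ‖c i - cu‖ ≤ |s i| := by
      calc ‖c i - cu‖ = ‖((s i : ℝ) : AddCircle r)‖ := by rw [h2]
        _ ≤ ‖(s i : ℝ)‖ := QuotientAddGroup.norm_mk_le_norm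
        _ = |s i| := Real.norm_eq_abs _
    have h4 : ‖cu - c i‖ = ‖c i - cu‖ := norm_sub_rev _ _
    linarith
  have hr2 : 2 ≤ r := by
    have i0 : Fin n := ⟨0, hn⟩
    have := hs1 i0
    have hm := hsmem i0
    rcases le_or_gt (s i0) 0 with h | h
    · have : s i0 ≤ -1 := by
        rcases abs_cases (s i0) with ⟨ha, _⟩ | ⟨ha, _⟩
        · linarith [hs1 i0]
        · linarith [hs1 i0]
      linarith [hm.1]
    · have : 1 ≤ s i0 := by
        rcases abs_cases (s i0) with ⟨ha, _⟩ | ⟨ha, _⟩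
        · linarith [hs1 i0]
        · linarith
      linarith [hm.2]
  set L : Fin n → ℝ := fun i => if s i ≤ 0 then s i + r else s i with hL
  have hLbound : ∀ i, 1 ≤ L i ∧ L i ≤ r - 1 := by
    intro i
    have hm := hsmem i
    have h1 := hs1 i
    simp only [hL]
    split_ifs with h
    · have hsle : s i ≤ -1 := by
        rcases abs_cases (s i) with ⟨ha, _⟩ | ⟨ha, _⟩ <;> linarith
      constructor <;> [linarith [hm.1]; linarith]
    · have hsge : 1 ≤ s i := by
        rcases abs_cases (s i) with ⟨ha, _⟩ | ⟨ha, _⟩ <;> linarith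
      constructor <;> [linarith; linarith [hm.2]]
  have hLcoe : ∀ i, ((L i : ℝ) : AddCircle r) = c i - cu := by
    intro i
    simp only [hL]
    split_ifs with h
    · rw [AddCircle.coe_add_period]
      exact coe_slift r hr _
    · exact coe_slift r hr _
  have hterm : ∀ j : ℕ,
      slift r hr (c (e ((j + 1 : ℕ) : ZMod n)) - c (e ((j : ℕ) : ZMod n)))
        = L (e ((j + 1 : ℕ) : ZMod n)) - L (e ((j : ℕ) : ZMod n)) := by
    intro j
    set a := e ((j : ℕ) : ZMod n)
    set b := e ((j + 1 : ℕ) : ZMod n)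
    have hdiff : c b - c a = ((L b - L a : ℝ) : AddCircle r) := by
      have : c b - c a = (c b - cu) - (c a - cu) := by abel
      rw [this, ← hLcoe a, ← hLcoe b]
      norm_cast
    rw [hdiff]
    apply slift_coe
    constructor
    · have := (hLbound a).2; have := (hLbound b).1; linarith
    · have := (hLbound a).1; have := (hLbound b).2; linarith
  calc (∑ j ∈ Finset.range n,
        slift r hr (c (e ((j + 1 : ℕ) : ZMod n)) - c (e ((j : ℕ) : ZMod n))))
      = ∑ j ∈ Finset.range n,
          (L (e ((j + 1 : ℕ) : ZMod n)) - L (e ((j : ℕ) : ZMod n))) := by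
        exact Finset.sum_congr rfl fun j _ => hterm j
    _ = L (e ((n : ℕ) : ZMod n)) - L (e ((0 : ℕ) : ZMod n)) :=
        Finset.sum_range_sub (fun j => L (e ((j : ℕ) : ZMod n))) n
    _ = 0 := by rw [ZMod.natCast_self]; simp
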